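/- Let ε ∈ (0, T], let X be an ℝ^d-valued random variable whose law has density ℓ with respect to Lebesgue measure with ‖ℓ‖_∞ < ∞, let Z be an ℝ^d-valued Gaussian random variable with mean 0 and covariance matrix 2ε·I_d, independent of X, and let h : ℝ^d → ℝ^d be Borel measurable with sup_x |h(x)| ≤ C·ε. Set Y := X + h(X) + Z. Then there exists a constant c ≥ 1 (depending only on d, T, C) such that the law of Y satisfies P(Y ∈ A) ≤ c · ‖ℓ‖_∞ · λ(A) for every Borel set A ⊆ ℝ^d, where λ is Lebesgue measure; equivalently, Y has a density whose essential supremum is at most c · ‖ℓ‖_∞. -/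

import Mathlib

open MeasureTheory ProbabilityTheory Real ENNReal

/-- The Gaussian heat kernel `p_t(x) = (4πt)^(-d/2) exp(-|x|²/(4t))`.
Note that the centered Gaussian law with covariance matrix `2ε I_d` has density
`p_ε` with respect to Lebesgue measure. -/
noncomputable def heatKernel (d : ℕ) (t : ℝ) (x : EuclideanSpace ℝ (Fin d)) : ℝ :=
  (4 * Real.pi * t) ^ (-(d : ℝ) / 2) * Real.exp (-‖x‖ ^ 2 / (4 * t))

lemma hk_nonneg (d : ℕ) (t : ℝ) (ht : 0 < t) (x : EuclideanSpace ℝ (Fin d)) :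
    0 ≤ heatKernel d t x := by
  unfold heatKernel; positivity

lemma hk_continuous (d : ℕ) (t : ℝ) : Continuous (heatKernel d t) :=
  continuous_const.mul (Real.continuous_exp.comp
    (((continuous_norm.pow 2).neg).div_const _))

lemma hk_lintegral (d : ℕ) (t : ℝ) (ht : 0 < t) :
    ∫⁻ x : EuclideanSpace ℝ (Fin d), ENNReal.ofReal (heatKernel d t x) = 1 := by
  have hb : (0:ℝ) < 1 / (4 * t) := by positivity
  have hint : Integrable (fun x : EuclideanSpace ℝ (Fin d) =>
      Real.exp (-(1/(4*t)) * ‖x‖ ^ 2)) := by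
    have h := (GaussianFourier.integrable_cexp_neg_mul_sq_norm_add
      (V := EuclideanSpace ℝ (Fin d))
      (b := (1/(4*t) : ℂ)) (by simpa using hb) 0 0).norm
    refine h.congr (Filter.Eventually.of_forall fun x => ?_)
    simp only [Complex.norm_exp]
    norm_num
    norm_cast
    exact Or.inl rfl
  have hval : ∫ x : EuclideanSpace ℝ (Fin d), Real.exp (-(1/(4*t)) * ‖x‖ ^ 2)
      = (4 * Real.pi * t) ^ ((d : ℝ) / 2) := by
    rw [GaussianFourier.integral_rexp_neg_mul_sq_norm hb, finrank_euclideanSpace_fin]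
    congr 1
    field_simp
  have hhk : ∀ x : EuclideanSpace ℝ (Fin d), heatKernel d t x
      = (4 * Real.pi * t) ^ (-(d : ℝ) / 2) * Real.exp (-(1/(4*t)) * ‖x‖ ^ 2) := by
    intro x; unfold heatKernel; congr 2; field_simp
  simp_rw [hhk]
  rw [← ofReal_integral_eq_lintegral_ofReal (hint.const_mul _)
    (Filter.Eventually.of_forall fun x => by positivity)]
  rw [integral_const_mul, hval, ← Real.rpow_add (by positivity), neg_div, neg_add_cancel,
    Real.rpow_zero, ENNReal.ofReal_one]

lemma hk_bound (d : ℕ) {T C ε : ℝ} (hC : 0 < C) (hε : 0 < ε) (hεT : ε ≤ T)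
    (u v : EuclideanSpace ℝ (Fin d)) (hv : ‖v‖ ≤ C * ε) :
    heatKernel d ε (u - v) ≤
      (2:ℝ) ^ ((d:ℝ)/2) * Real.exp (C^2 * T / 4) * heatKernel d (2*ε) u := by
  have hT : 0 < T := lt_of_lt_of_le hε hεT
  have h4ε : (0:ℝ) < 4*ε := by positivity
  have h8ε : (0:ℝ) < 8*ε := by positivity
  have hv2 : ‖v‖^2 ≤ (C*ε)^2 := by nlinarith [norm_nonneg v]
  have hu2 : ‖u‖^2 ≤ 2*‖u-v‖^2 + 2*‖v‖^2 := by
    have h := norm_add_le (u - v) v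
    rw [sub_add_cancel] at h
    nlinarith [norm_nonneg (u-v), norm_nonneg v, norm_nonneg u, sq_nonneg (‖u-v‖ - ‖v‖)]
  have hexpo : -‖u - v‖^2/(4*ε) ≤ C^2*T/4 + -‖u‖^2/(4*(2*ε)) := by
    have heq : C^2*T/4 + -‖u‖^2/(4*(2*ε)) = (2*ε*(C^2*T) - ‖u‖^2)/(8*ε) := by
      field_simp; ring
    rw [heq, div_le_div_iff₀ h4ε h8ε]
    nlinarith [hv2, hu2, hε.le, hεT, sq_nonneg C, mul_pos hC hε]
  have hexp : Real.exp (-‖u - v‖^2/(4*ε)) ≤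
      Real.exp (C^2*T/4) * Real.exp (-‖u‖^2/(4*(2*ε))) := by
    rw [← Real.exp_add]
    exact Real.exp_le_exp.mpr hexpo
  have hcoef : (4*Real.pi*ε) ^ (-(d:ℝ)/2)
      = 2 ^ ((d:ℝ)/2) * (4*Real.pi*(2*ε)) ^ (-(d:ℝ)/2) := by
    have h2 : (4*Real.pi*(2*ε)) ^ (-(d:ℝ)/2) = 2 ^ (-(d:ℝ)/2) * (4*Real.pi*ε) ^ (-(d:ℝ)/2) := by
      rw [show 4*Real.pi*(2*ε) = 2 * (4*Real.pi*ε) by ring,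
        Real.mul_rpow (by norm_num) (by positivity)]
    rw [h2, ← mul_assoc, ← Real.rpow_add (by norm_num : (0:ℝ) < 2),
      show (d:ℝ)/2 + -(d:ℝ)/2 = 0 by ring, Real.rpow_zero, one_mul]
  unfold heatKernel
  rw [hcoef]
  calc 2 ^ ((d:ℝ)/2) * (4*Real.pi*(2*ε)) ^ (-(d:ℝ)/2) * Real.exp (-‖u - v‖^2/(4*ε))
      ≤ 2 ^ ((d:ℝ)/2) * (4*Real.pi*(2*ε)) ^ (-(d:ℝ)/2) *
        (Real.exp (C^2*T/4) * Real.exp (-‖u‖^2/(4*(2*ε)))) := by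
        have hpos : (0:ℝ) ≤ 2 ^ ((d:ℝ)/2) * (4*Real.pi*(2*ε)) ^ (-(d:ℝ)/2) := by positivity
        exact mul_le_mul_of_nonneg_left hexp hpos
    _ = 2 ^ ((d:ℝ)/2) * Real.exp (C^2 * T / 4) *
        ((4*Real.pi*(2*ε)) ^ (-(d:ℝ)/2) * Real.exp (-‖u‖^2/(4*(2*ε)))) := by ring

theorem stmt_11 (d : ℕ) {Ω : Type*} [MeasurableSpace Ω] (P : Measure Ω)
    [IsProbabilityMeasure P] (T C : ℝ) (hT : 0 < T) (hC : 0 < C) :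
    ∃ c : ℝ, 1 ≤ c ∧
      ∀ (ε : ℝ), 0 < ε → ε ≤ T →
      ∀ (X Z : Ω → EuclideanSpace ℝ (Fin d)), Measurable X → Measurable Z →
      ∀ ℓ : EuclideanSpace ℝ (Fin d) → ℝ, Measurable ℓ → (∀ x, 0 ≤ ℓ x) →
      -- `‖ℓ‖_∞ < ∞`:
      essSup (fun x => ENNReal.ofReal (ℓ x))
        (volume : Measure (EuclideanSpace ℝ (Fin d))) < ⊤ →
      -- the law of `X` has density `ℓ` w.r.t. Lebesgue measure:
      P.map X = volume.withDensity (fun x => ENNReal.ofReal (ℓ x)) →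
      -- `Z` is Gaussian with mean `0` and covariance matrix `2ε I_d`,
      -- i.e. its law has density `p_ε` w.r.t. Lebesgue measure:
      P.map Z = volume.withDensity (fun z => ENNReal.ofReal (heatKernel d ε z)) →
      IndepFun X Z P →
      ∀ h : EuclideanSpace ℝ (Fin d) → EuclideanSpace ℝ (Fin d), Measurable h →
      (∀ x, ‖h x‖ ≤ C * ε) →
      ∀ A : Set (EuclideanSpace ℝ (Fin d)), MeasurableSet A →
        P.map (fun ω => X ω + h (X ω) + Z ω) A ≤
          ENNReal.ofReal c *
            essSup (fun x => ENNReal.ofReal (ℓ x))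
              (volume : Measure (EuclideanSpace ℝ (Fin d))) * volume A := by
  set E := EuclideanSpace ℝ (Fin d) with hE
  set c : ℝ := (2:ℝ) ^ ((d:ℝ)/2) * Real.exp (C^2 * T / 4) with hc
  have hc1 : (1:ℝ) ≤ c := by
    have h1 : (1:ℝ) ≤ 2 ^ ((d:ℝ)/2) := by
      rw [← Real.rpow_zero 2]
      exact Real.rpow_le_rpow_of_exponent_le one_le_two (by positivity)
    have h2 : (1:ℝ) ≤ Real.exp (C^2*T/4) := Real.one_le_exp (by positivity)
    nlinarith
  refine ⟨c, hc1, ?_⟩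
  intro ε hε hεT X Z hX hZ ℓ hℓm hℓ0 hℓtop hmapX hmapZ hind h hh hhb A hA
  set L := essSup (fun x => ENNReal.ofReal (ℓ x)) (volume : Measure E) with hL
  -- measurability facts
  have hF : Measurable (fun p : E × E => p.1 + h p.1 + p.2) :=
    (measurable_fst.add (hh.comp measurable_fst)).add measurable_snd
  have hq : Measurable (fun z : E => ENNReal.ofReal (heatKernel d (2*ε) z)) :=
    ((hk_continuous d (2*ε)).measurable).ennreal_ofReal
  have hqε : Measurable (fun z : E => ENNReal.ofReal (heatKernel d ε z)) :=
    ((hk_continuous d ε).measurable).ennreal_ofReal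
  -- law of Y
  have hprod : P.map (fun ω => (X ω, Z ω)) = (P.map X).prod (P.map Z) :=
    (indepFun_iff_map_prod_eq_prod_map_map hX.aemeasurable hZ.aemeasurable).mp hind
  haveI : IsProbabilityMeasure (P.map Z) := Measure.isProbabilityMeasure_map hZ.aemeasurable
  haveI : IsProbabilityMeasure (P.map X) := Measure.isProbabilityMeasure_map hX.aemeasurable
  have hmapY : P.map (fun ω => X ω + h (X ω) + Z ω)
      = ((P.map X).prod (P.map Z)).map (fun p : E × E => p.1 + h p.1 + p.2) := by
    rw [← hprod, Measure.map_map hF (hX.prodMk hZ)]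
    rfl
  rw [hmapY, Measure.map_apply hF hA, Measure.prod_apply (hF hA)]
  -- inner measure as integral over A
  have hinner : ∀ x : E,
      (P.map Z) (Prod.mk x ⁻¹' ((fun p : E × E => p.1 + h p.1 + p.2) ⁻¹' A))
        = ∫⁻ y in A, ENNReal.ofReal (heatKernel d ε (y - (x + h x))) := by
    intro x
    have hBset : Prod.mk x ⁻¹' ((fun p : E × E => p.1 + h p.1 + p.2) ⁻¹' A)
        = (fun z : E => (x + h x) + z) ⁻¹' A := by
      ext z; simp [Set.mem_preimage, add_assoc]
    have hBm : MeasurableSet ((fun z : E => (x + h x) + z) ⁻¹' A) :=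
      (measurable_const_add _) hA
    rw [hBset, hmapZ, withDensity_apply _ hBm]
    have hmp : MeasurePreserving (fun y : E => y - (x + h x))
        (volume : Measure E) volume := measurePreserving_sub_right volume _
    have hemb : MeasurableEmbedding (fun y : E => y - (x + h x)) :=
      (Homeomorph.subRight (x + h x)).measurableEmbedding
    have hpre : (fun y : E => y - (x + h x)) ⁻¹' ((fun z : E => (x + h x) + z) ⁻¹' A)
        = A := by
      ext y; simp [Set.mem_preimage, add_sub_cancel]
    rw [← hmp.setLIntegral_comp_preimage_emb hemb
      (fun z => ENNReal.ofReal (heatKernel d ε z)) _, hpre]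
  rw [lintegral_congr hinner, hmapX]
  -- measurability of the inner integral as a function of x
  have hker : Measurable (fun p : E × E =>
      ENNReal.ofReal (heatKernel d ε (p.2 - (p.1 + h p.1)))) :=
    (((hk_continuous d ε).measurable).comp
      (measurable_snd.sub (measurable_fst.add (hh.comp measurable_fst)))).ennreal_ofReal
  have hG : Measurable (fun x : E =>
      ∫⁻ y in A, ENNReal.ofReal (heatKernel d ε (y - (x + h x)))) :=
    Measurable.lintegral_prod_right hker
  rw [lintegral_withDensity_eq_lintegral_mul _ hℓm.ennreal_ofReal hG]
  -- pointwise bound on the kernel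
  have hLne : L ≠ ⊤ := hℓtop.ne
  have hcne : ENNReal.ofReal c ≠ ⊤ := ENNReal.ofReal_ne_top
  have hptA : ∀ x : E, (∫⁻ y in A, ENNReal.ofReal (heatKernel d ε (y - (x + h x))))
      ≤ ENNReal.ofReal c * ∫⁻ y in A, ENNReal.ofReal (heatKernel d (2*ε) (y - x)) := by
    intro x
    rw [← lintegral_const_mul' _ _ hcne]
    refine lintegral_mono fun y => ?_
    rw [← ENNReal.ofReal_mul (by positivity)]
    refine ENNReal.ofReal_le_ofReal ?_
    have := hk_bound d hC hε hεT (y - x) (h x) (hhb x)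
    rw [sub_add_eq_sub_sub]
    rw [hc]
    exact this
  calc (∫⁻ x, ENNReal.ofReal (ℓ x) *
        ∫⁻ y in A, ENNReal.ofReal (heatKernel d ε (y - (x + h x))) ∂(volume : Measure E))
      ≤ ∫⁻ x, L * (ENNReal.ofReal c *
          ∫⁻ y in A, ENNReal.ofReal (heatKernel d (2*ε) (y - x))) ∂(volume : Measure E) := by
        refine lintegral_mono_ae ?_
        filter_upwards [ae_le_essSup (fun x : E => ENNReal.ofReal (ℓ x))] with x hx
        exact mul_le_mul' hx (hptA x)
    _ = L * (ENNReal.ofReal c *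
          ∫⁻ x, ∫⁻ y in A, ENNReal.ofReal (heatKernel d (2*ε) (y - x)) ∂(volume : Measure E)
            ∂(volume : Measure E)) := by
        rw [lintegral_const_mul' _ _ hLne, lintegral_const_mul' _ _ hcne]
    _ = L * (ENNReal.ofReal c * volume A) := by
        congr 1
        congr 1
        rw [lintegral_lintegral_swap]
        · have hone : ∀ y : E, (∫⁻ x, ENNReal.ofReal (heatKernel d (2*ε) (y - x))
              ∂(volume : Measure E)) = 1 := by
            intro y
            have hmp : MeasurePreserving (fun x : E => y - x)
                (volume : Measure E) volume := Measure.measurePreserving_sub_left volume y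
            rw [hmp.lintegral_comp hq]
            exact hk_lintegral d (2*ε) (by positivity)
          calc (∫⁻ y in A, ∫⁻ x, ENNReal.ofReal (heatKernel d (2*ε) (y - x))
                ∂(volume : Measure E) ∂(volume : Measure E))
              = ∫⁻ _ in A, 1 ∂(volume : Measure E) := by
                exact setLIntegral_congr_fun hA (fun y _ => hone y)
            _ = volume A := setLIntegral_one A
        · exact (((hk_continuous d (2*ε)).measurable).comp
            (measurable_snd.sub measurable_fst)).ennreal_ofReal.aemeasurable
    _ = ENNReal.ofReal c * L * volume A := by ring
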